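/- Assume there exists a projection map proj from Gauss diagrams to realizable Gauss diagrams satisfying: (1) equivalence-preservation, (2) proj(G) obtained from G by deleting chords, (3) proj fixes realizable diagrams. Then for every classical knot K and virtual knot K̃ realizable by K, the virtual bridge number satisfies vb(K̃) = b(K). -/

import Mathlib

/-- A Gauss diagram, recorded as the cyclic word of its chord endpoints: each endpoint is
a pair `(c, b)` where `c` is the chord label and `b = true` for the arrow head,
`b = false` for the arrow tail.  Each chord occurring in the diagram contributes exactly
one head and one tail. -/
structure GaussDiagram where
  word : List (ℕ × Bool)
  once : ∀ c b, word.count (c, b) ≤ 1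
  paired : ∀ c, (c, true) ∈ word ↔ (c, false) ∈ word

/-- The number of bridges of a Gauss diagram: the number of arcs of the circle between
two (cyclically) consecutive arrow heads containing at least one arrow tail.  Since the
endpoints strictly between consecutive heads are all tails, such arcs correspond exactly
to cyclically adjacent pairs (tail, head). -/
def bridges (w : List (ℕ × Bool)) : ℕ :=
  ((w.zip (w.rotate 1)).filter (fun p => !p.1.2 && p.2.2)).length

/-- `G₁` is obtained from `G₂` by deleting the chord `c` (removing its head and its tail
from the circle). -/
def IsChordDeletion (G₁ G₂ : GaussDiagram) (c : ℕ) : Prop :=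
  (c, true) ∈ G₂.word ∧ G₁.word = G₂.word.filter (fun p => p.1 != c)

/-- `G₁` is obtained from `G₂` by deleting the (finite) set `S` of chords. -/
def IsChordsDeletion (G₁ G₂ : GaussDiagram) (S : Finset ℕ) : Prop :=
  G₁.word = G₂.word.filter (fun p => decide (p.1 ∉ S))

section CycLemmas

variable {α : Type*} (f : α → Bool)

/-- cyclic count of (tail, head) adjacencies, generic version of `bridges`. -/
def cyc (l : List α) : ℕ :=
  ((l.zip (l.rotate 1)).filter (fun p => !f p.1 && f p.2)).length

/-- weight of a single adjacency -/
def step (a b : α) : ℕ := if !f a && f b then 1 else 0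

/-- linear count of (tail, head) adjacencies -/
def lin : List α → ℕ
  | a :: b :: t => step f a b + lin (b :: t)
  | _ => 0

lemma lin_zip : ∀ l : List α, lin f l = ((l.zip l.tail).filter (fun p => !f p.1 && f p.2)).length
  | [] => rfl
  | [_] => rfl
  | a :: b :: t => by
    have ih := lin_zip (b :: t)
    simp only [lin, List.tail_cons, List.zip_cons_cons, List.filter_cons] at *
    rw [ih]
    unfold step
    split <;> simp_all <;> omega

lemma cyc_cons (a : α) (t : List α) : cyc f (a :: t) = lin f (a :: t ++ [a]) := by
  have hrot : (a :: t).rotate 1 = t ++ [a] := by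
    rw [show (1 : ℕ) = 0 + 1 from rfl, List.rotate_cons_succ, List.rotate_zero]
  have hlen : (a :: t).length = (t ++ [a]).length := by simp
  have hz : ((a :: t) ++ [a]).zip ((t ++ [a]) ++ ([] : List α)) =
      (a :: t).zip (t ++ [a]) ++ ([a].zip ([] : List α)) := List.zip_append hlen
  simp only [List.zip_nil_right, List.append_nil] at hz
  rw [lin_zip]
  simp only [cyc, hrot]
  rw [show (a :: t ++ [a]).tail = t ++ [a] from rfl, hz]

lemma lin_append_two : ∀ (l : List α) (x y : α),
    lin f (l ++ [x, y]) = lin f (l ++ [x]) + step f x y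
  | [], x, y => by simp [lin]
  | [a], x, y => by simp [lin, Nat.add_assoc]
  | a :: b :: t, x, y => by
    have ih := lin_append_two (b :: t) x y
    simp only [List.cons_append, List.append_eq, lin] at *
    omega

lemma cyc_rot1 (a : α) (t : List α) : cyc f (a :: t) = cyc f (t ++ [a]) := by
  cases t with
  | nil => rfl
  | cons b t' =>
    rw [cyc_cons, show ((b :: t') ++ [a]) = b :: (t' ++ [a]) from rfl, cyc_cons]
    have h2 := lin_append_two f (b :: t') a b
    have : (b :: (t' ++ [a]) ++ [b]) = (b :: t') ++ [a, b] := by simp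
    rw [this, h2]
    have : (a :: (b :: t') ++ [a]) = a :: b :: (t' ++ [a]) := by simp
    rw [this, show lin f (a :: b :: (t' ++ [a])) = step f a b + lin f (b :: (t' ++ [a])) from rfl]
    have : (b :: t') ++ [a] = b :: (t' ++ [a]) := rfl
    rw [this]
    omega

lemma cyc_comm : ∀ (l₁ l₂ : List α), cyc f (l₁ ++ l₂) = cyc f (l₂ ++ l₁)
  | [], l₂ => by simp
  | a :: l₁, l₂ => by
    have ih := cyc_comm l₁ (l₂ ++ [a])
    rw [show (a :: l₁) ++ l₂ = a :: (l₁ ++ l₂) from rfl, cyc_rot1,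
        show (l₁ ++ l₂) ++ [a] = l₁ ++ (l₂ ++ [a]) by simp, ih]
    simp

lemma lin_ins : ∀ (L : List α) (x b : α),
    lin f (L ++ [b]) ≤ step f x b + lin f (L ++ [x])
  | [], x, b => by simp [lin]
  | [a], x, b => by
    simp only [List.cons_append, List.nil_append, lin]
    unfold step
    cases f a <;> cases f b <;> cases f x <;> simp
  | a :: c :: t, x, b => by
    have ih := lin_ins (c :: t) x b
    simp only [List.cons_append, List.append_eq, lin] at *
    omega

lemma cyc_ins (x : α) (l : List α) : cyc f l ≤ cyc f (x :: l) := by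
  cases l with
  | nil => exact Nat.zero_le _
  | cons b t =>
    rw [cyc_cons, cyc_cons]
    have : (x :: (b :: t) ++ [x]) = x :: b :: (t ++ [x]) := by simp
    rw [this, show lin f (x :: b :: (t ++ [x])) = step f x b + lin f (b :: (t ++ [x])) from rfl]
    have h := lin_ins f (b :: t) x b
    simp only [List.cons_append] at *
    omega

lemma cyc_del (u v : List α) (x : α) : cyc f (u ++ v) ≤ cyc f (u ++ x :: v) := by
  rw [cyc_comm, cyc_comm f u (x :: v)]
  calc cyc f (v ++ u) ≤ cyc f (x :: (v ++ u)) := cyc_ins f x _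
    _ = cyc f ((x :: v) ++ u) := rfl

lemma cyc_sublist_aux {l₁ l₂ : List α} (h : l₁.Sublist l₂) :
    ∀ u : List α, cyc f (u ++ l₁) ≤ cyc f (u ++ l₂) := by
  induction h with
  | slnil => intro u; exact le_refl _
  | cons a h ih =>
    intro u
    exact le_trans (ih u) (cyc_del f u _ a)
  | cons_cons a h ih =>
    intro u
    simpa using ih (u ++ [a])

lemma cyc_mono {l₁ l₂ : List α} (h : l₁.Sublist l₂) : cyc f l₁ ≤ cyc f l₂ := by
  simpa using cyc_sublist_aux f h []

end CycLemmas

lemma bridges_eq_cyc (w : List (ℕ × Bool)) : bridges w = cyc (fun p => p.2) w := rfl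

lemma bridges_filter_le (p : ℕ × Bool → Bool) (w : List (ℕ × Bool)) :
    bridges (w.filter p) ≤ bridges w := by
  rw [bridges_eq_cyc, bridges_eq_cyc]
  exact cyc_mono _ List.filter_sublist

/-- Manturov's projection theorem implies that the virtual bridge number of a virtual
knot realizable by a classical knot `K` equals the bridge number of `K`.  The
equivalence relation `equiv` and the set `Realizable` of realizable Gauss diagrams are
abstract; `K` is represented by a realizable diagram `G₀`, and the virtual knot `K̃`
realizable by `K` is the `equiv`-class of `G₀`.  Then
`vb(K̃) = min { bridges G : G ~ G₀ }` equals
`b(K) = min { bridges G : G realizable, G ~ G₀ }`. -/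
theorem virtual_bridge_number_eq_bridge_number
    (equiv : GaussDiagram → GaussDiagram → Prop) (hequiv : Equivalence equiv)
    (Realizable : GaussDiagram → Prop)
    (proj : GaussDiagram → GaussDiagram)
    (hprojR : ∀ G, Realizable (proj G))
    (h1 : ∀ G₁ G₂, equiv G₁ G₂ → equiv (proj G₁) (proj G₂))
    (h2 : ∀ G, ∃ S : Finset ℕ, IsChordsDeletion (proj G) G S)
    (h3 : ∀ G, Realizable G → proj G = G)
    (G₀ : GaussDiagram) (hG₀ : Realizable G₀) :
    sInf ((fun G => bridges G.word) '' {G | equiv G G₀}) =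
      sInf ((fun G => bridges G.word) '' {G | Realizable G ∧ equiv G G₀}) := by
  set A := (fun G => bridges G.word) '' {G | equiv G G₀} with hA
  set B := (fun G => bridges G.word) '' {G | Realizable G ∧ equiv G G₀} with hB
  have hBA : B ⊆ A := by
    rintro n ⟨G, ⟨_, hG⟩, rfl⟩
    exact ⟨G, hG, rfl⟩
  have hAne : A.Nonempty := ⟨bridges G₀.word, G₀, hequiv.refl G₀, rfl⟩
  have hBne : B.Nonempty := ⟨bridges G₀.word, G₀, ⟨hG₀, hequiv.refl G₀⟩, rfl⟩
  apply le_antisymm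
  · exact Nat.sInf_le (hBA (Nat.sInf_mem hBne))
  · -- sInf B ≤ sInf A : project the minimizer of A
    obtain ⟨G, hG, hGval⟩ := Nat.sInf_mem hAne
    have hprojG : equiv (proj G) G₀ := by
      have := h1 G G₀ hG
      rwa [h3 G₀ hG₀] at this
    have hmem : bridges (proj G).word ∈ B := ⟨proj G, ⟨hprojR G, hprojG⟩, rfl⟩
    have hle : bridges (proj G).word ≤ bridges G.word := by
      obtain ⟨S, hS⟩ := h2 G
      rw [hS]
      exact bridges_filter_le _ _
    calc sInf B ≤ bridges (proj G).word := Nat.sInf_le hmem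
      _ ≤ bridges G.word := hle
      _ = sInf A := hGval
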